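/- Let 𝔤 be the six-dimensional real Lie algebra with orthonormal basis e₁,…,e₆ (with respect to an inner product g), abelian ideal 𝔥 = span{e₁,…,e₅}, and brackets [e₆,e₁] = a·e₁ + v₁e₂ + v₂e₃ + v₃e₄ + v₄e₅, [e₆,e₂] = A₁₁e₂ + A₂₁e₃ - A₂₄e₄ - A₁₄e₅, [e₆,e₃] = A₁₂e₂ + A₂₂e₃ - A₂₃e₄ - A₁₃e₅, [e₆,e₄] = A₁₃e₂ + A₂₃e₃ + A₂₂e₄ + A₁₂e₅, [e₆,e₅] = A₁₄e₂ + A₂₄e₃ + A₂₁e₄ + A₁₁e₅, for real numbers a, vᵢ, A_{jk}, with all brackets among e₁,…,e₅ zero. Let J be given by Je₁ = e₆, Je₂ = e₅, Je₃ = e₄, Je₄ = -e₃, Je₅ = -e₂, Je₆ = -e₁, and ω = g(J·,·). Then the torsion 3-form H = dᶜω equals (A₁₃-A₂₄)(e^{123}-e^{145}) - (A₁₂+A₂₁)(e^{124}+e^{135}) - 2A₂₂·e^{134} - 2A₁₁·e^{125} - v₁·e^{126} - v₂·e^{136} - v₃·e^{146} - v₄·e^{156}, where e¹,…,e⁶ is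 the dual basis and e^{ijk} = eⁱ∧eʲ∧e^k. -/

import Mathlib

noncomputable section

/-- The underlying vector space of a six-dimensional real Lie algebra. -/
abbrev V6 : Type := Fin 6 → ℝ

/-- The Lie bracket of the almost abelian Lie algebra determined by the matrix `A` of
`ad_{f₆}` (column `j` of `A` lists the coordinates of `[f₆, f_{j+1}]`; the ideal
`span{f₁,…,f₅}` is abelian). -/
def braa (A : Matrix (Fin 6) (Fin 6) ℝ) : V6 →ₗ[ℝ] V6 →ₗ[ℝ] V6 :=
  LinearMap.mk₂ ℝ (fun x y => x 5 • A.mulVec y - y 5 • A.mulVec x)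
    (by intro x x' y; simp [Matrix.mulVec_add, Pi.add_apply, add_smul, smul_add]; module)
    (by intro c x y; simp [Matrix.mulVec_smul, Pi.smul_apply, smul_eq_mul, mul_smul]; module)
    (by intro x y y'; simp [Matrix.mulVec_add, smul_add, add_smul]; module)
    (by intro c x y; simp [Matrix.mulVec_smul, Pi.smul_apply, smul_eq_mul, mul_smul]; module)

/-- The bilinear form on `V6` determined by a matrix `G`. -/
def gOf (G : Matrix (Fin 6) (Fin 6) ℝ) : V6 →ₗ[ℝ] V6 →ₗ[ℝ] ℝ :=
  LinearMap.mk₂ ℝ (fun x y => dotProduct x (G.mulVec y))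
    (by intro x x' y; simp [add_dotProduct])
    (by intro c x y; simp [smul_dotProduct, smul_eq_mul])
    (by intro x y y'; simp [Matrix.mulVec_add, dotProduct_add])
    (by intro c x y; simp [Matrix.mulVec_smul, dotProduct_smul, smul_eq_mul])

/-- The standard inner product, making `f₁,…,f₆` orthonormal. -/
def gstd : V6 →ₗ[ℝ] V6 →ₗ[ℝ] ℝ := gOf 1

/-- The linear endomorphism of `V6` determined by a matrix. -/
def endOf (M : Matrix (Fin 6) (Fin 6) ℝ) : V6 →ₗ[ℝ] V6 := Matrix.toLin' M

/-- `br` is a Lie bracket: antisymmetric and satisfying the Jacobi identity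
(bilinearity is built into the type). -/
def IsBracket (br : V6 →ₗ[ℝ] V6 →ₗ[ℝ] V6) : Prop :=
  (∀ x y, br x y = - br y x) ∧
  (∀ x y z, br (br x y) z + br (br y z) x + br (br z x) y = 0)

/-- The Lie algebra has an abelian ideal of codimension one. -/
def IsAlmostAbelian (br : V6 →ₗ[ℝ] V6 →ₗ[ℝ] V6) : Prop :=
  ∃ h : Submodule ℝ V6, Module.finrank ℝ h = 5 ∧
    (∀ x ∈ h, ∀ y ∈ h, br x y = 0) ∧ (∀ x : V6, ∀ y ∈ h, br x y ∈ h)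

/-- Nilpotency of the Lie algebra: some length of iterated brackets
`[x₁,[x₂,…,[xₙ,y]…]]` always vanishes. -/
def IsNilpotentBr (br : V6 →ₗ[ℝ] V6 →ₗ[ℝ] V6) : Prop :=
  ∃ n : ℕ, ∀ x : Fin n → V6, ∀ y : V6, (List.ofFn x).foldr (fun a b => br a b) y = 0

/-- The Nijenhuis tensor of `J`. -/
def Nij (br : V6 →ₗ[ℝ] V6 →ₗ[ℝ] V6) (J : V6 →ₗ[ℝ] V6) (x y : V6) : V6 :=
  br (J x) (J y) - br x y - J (br (J x) y) - J (br x (J y))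

/-- A complex structure: `J ∘ J = -id` with vanishing Nijenhuis tensor. -/
def IsCpxStr (br : V6 →ₗ[ℝ] V6 →ₗ[ℝ] V6) (J : V6 →ₗ[ℝ] V6) : Prop :=
  (∀ x, J (J x) = -x) ∧ (∀ x y, Nij br J x y = 0)

/-- A Hermitian structure: a complex structure together with a positive-definite
compatible inner product. -/
def IsHermStr (br : V6 →ₗ[ℝ] V6 →ₗ[ℝ] V6) (J : V6 →ₗ[ℝ] V6)
    (g : V6 →ₗ[ℝ] V6 →ₗ[ℝ] ℝ) : Prop :=
  IsCpxStr br J ∧ (∀ x y, g x y = g y x) ∧ (∀ x, x ≠ 0 → 0 < g x x) ∧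
    (∀ x y, g (J x) (J y) = g x y)

/-- The fundamental form `ω = g(J·,·)`. -/
def fund (J : V6 →ₗ[ℝ] V6) (g : V6 →ₗ[ℝ] V6 →ₗ[ℝ] ℝ) : V6 → V6 → ℝ :=
  fun x y => g (J x) y

/-- The Chevalley–Eilenberg differential of a 2-form. -/
def d2 (br : V6 →ₗ[ℝ] V6 →ₗ[ℝ] V6) (ω : V6 → V6 → ℝ) : V6 → V6 → V6 → ℝ :=
  fun x y z => -ω (br x y) z + ω (br x z) y - ω (br y z) x

/-- The Chevalley–Eilenberg differential of a 3-form. -/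
def d3 (br : V6 →ₗ[ℝ] V6 →ₗ[ℝ] V6) (H : V6 → V6 → V6 → ℝ) : V6 → V6 → V6 → V6 → ℝ :=
  fun x y z w => -H (br x y) z w + H (br x z) y w - H (br x w) y z
    - H (br y z) x w + H (br y w) x z - H (br z w) x y

/-- The form `dᶜω`, where `dᶜω(X,Y,Z) = dω(JX,JY,JZ)` and `ω = g(J·,·)`. -/
def dC (br : V6 →ₗ[ℝ] V6 →ₗ[ℝ] V6) (J : V6 →ₗ[ℝ] V6)
    (g : V6 →ₗ[ℝ] V6 →ₗ[ℝ] ℝ) : V6 → V6 → V6 → ℝ :=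
  fun x y z => d2 br (fund J g) (J x) (J y) (J z)

/-- A Kähler structure: a Hermitian structure with closed fundamental form. -/
def IsKahlerStr (br : V6 →ₗ[ℝ] V6 →ₗ[ℝ] V6) (J : V6 →ₗ[ℝ] V6)
    (g : V6 →ₗ[ℝ] V6 →ₗ[ℝ] ℝ) : Prop :=
  IsHermStr br J g ∧ ∀ x y z, d2 br (fund J g) x y z = 0

/-- An SKT (pluriclosed) structure: a Hermitian structure with `d(dᶜω) = 0`. -/
def IsSKTStr (br : V6 →ₗ[ℝ] V6 →ₗ[ℝ] V6) (J : V6 →ₗ[ℝ] V6)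
    (g : V6 →ₗ[ℝ] V6 →ₗ[ℝ] ℝ) : Prop :=
  IsHermStr br J g ∧ ∀ x y z w, d3 br (dC br J g) x y z w = 0

/-- A generalized Kähler structure `(J₊, J₋, g)`. -/
def IsGenKahler (br : V6 →ₗ[ℝ] V6 →ₗ[ℝ] V6) (Jp Jm : V6 →ₗ[ℝ] V6)
    (g : V6 →ₗ[ℝ] V6 →ₗ[ℝ] ℝ) : Prop :=
  IsHermStr br Jp g ∧ IsHermStr br Jm g ∧
    (∀ x y z, dC br Jp g x y z + dC br Jm g x y z = 0) ∧
    (∀ x y z w, d3 br (dC br Jp g) x y z w = 0)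

/-- Unimodularity: every adjoint operator is traceless. -/
def Unimodular (br : V6 →ₗ[ℝ] V6 →ₗ[ℝ] V6) : Prop :=
  ∀ x : V6, LinearMap.trace ℝ V6 (br x) = 0

/-- Isomorphism of Lie algebra structures on `V6`. -/
def LieIso (br br' : V6 →ₗ[ℝ] V6 →ₗ[ℝ] V6) : Prop :=
  ∃ φ : V6 ≃ₗ[ℝ] V6, ∀ x y, φ (br x y) = br' (φ x) (φ y)

/-- The basis 3-form `fⁱ ∧ fʲ ∧ f^k`. -/
def tri (i j k : Fin 6) : V6 → V6 → V6 → ℝ := fun x y z =>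
  Matrix.det !![x i, x j, x k; y i, y j, y k; z i, z j, z k]

/-- The complex structure `J e₁ = e₆`, `J e₂ = e₅`, `J e₃ = e₄`, `J e₄ = -e₃`,
`J e₅ = -e₂`, `J e₆ = -e₁`. -/
def J7 : V6 →ₗ[ℝ] V6 :=
  endOf !![0,0,0,0,0,-1; 0,0,0,0,-1,0; 0,0,0,-1,0,0; 0,0,1,0,0,0; 0,1,0,0,0,0; 1,0,0,0,0,0]

lemma cv5 {α : Type*} (x : α) (u : Fin 5 → α) : Matrix.vecCons x u 5 = u 4 := rfl

lemma J7_apply (x : V6) : J7 x = ![-x 5, -x 4, -x 3, x 2, x 1, x 0] := by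
  funext i
  fin_cases i <;>
    simp [J7, endOf, Matrix.toLin'_apply, Matrix.mulVec, dotProduct,
      Fin.sum_univ_six, cv5]

lemma gstd_apply (u w : V6) :
    gstd u w = u 0 * w 0 + u 1 * w 1 + u 2 * w 2 + u 3 * w 3 + u 4 * w 4 + u 5 * w 5 := by
  simp [gstd, gOf, Matrix.one_mulVec, dotProduct, Fin.sum_univ_six]

lemma Amat_mulVec (a v1 v2 v3 v4 A11 A12 A13 A14 A21 A22 A23 A24 : ℝ) (w : V6) :
    (!![a,0,0,0,0,0;
        v1,A11,A12,A13,A14,0;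
        v2,A21,A22,A23,A24,0;
        v3,-A24,-A23,A22,A21,0;
        v4,-A14,-A13,A12,A11,0;
        0,0,0,0,0,0]).mulVec w =
      ![a * w 0,
        v1 * w 0 + A11 * w 1 + A12 * w 2 + A13 * w 3 + A14 * w 4,
        v2 * w 0 + A21 * w 1 + A22 * w 2 + A23 * w 3 + A24 * w 4,
        v3 * w 0 - A24 * w 1 - A23 * w 2 + A22 * w 3 + A21 * w 4,
        v4 * w 0 - A14 * w 1 - A13 * w 2 + A12 * w 3 + A11 * w 4,
        0] := by
  funext i
  fin_cases i <;>
    · simp [Matrix.mulVec, dotProduct, Fin.sum_univ_six, cv5]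
      try ring

lemma tri_apply (i j k : Fin 6) (x y z : V6) :
    tri i j k x y z =
      x i * (y j * z k - y k * z j) - x j * (y i * z k - y k * z i)
        + x k * (y i * z j - y j * z i) := by
  simp [tri, Matrix.det_fin_three]
  ring

set_option maxHeartbeats 2000000 in
/-- The torsion 3-form `H = dᶜω` of a Hermitian almost abelian Lie algebra with data
`(a, v, A)`, computed explicitly. -/
theorem stmt_7 (a v1 v2 v3 v4 A11 A12 A13 A14 A21 A22 A23 A24 : ℝ) :
    ∀ x y z : V6,
      dC (braa !![a,0,0,0,0,0;
                  v1,A11,A12,A13,A14,0;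
                  v2,A21,A22,A23,A24,0;
                  v3,-A24,-A23,A22,A21,0;
                  v4,-A14,-A13,A12,A11,0;
                  0,0,0,0,0,0]) J7 gstd x y z =
        (A13 - A24) * (tri 0 1 2 x y z - tri 0 3 4 x y z)
        - (A12 + A21) * (tri 0 1 3 x y z + tri 0 2 4 x y z)
        - 2 * A22 * tri 0 2 3 x y z - 2 * A11 * tri 0 1 4 x y z
        - v1 * tri 0 1 5 x y z - v2 * tri 0 2 5 x y z
        - v3 * tri 0 3 5 x y z - v4 * tri 0 4 5 x y z := by
  intro x y z
  obtain ⟨x0,x1,x2,x3,x4,x5,rfl⟩ : ∃ a b c d e f, x = ![a,b,c,d,e,f] :=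
    ⟨_,_,_,_,_,_, by funext i; fin_cases i <;> rfl⟩
  obtain ⟨y0,y1,y2,y3,y4,y5,rfl⟩ : ∃ a b c d e f, y = ![a,b,c,d,e,f] :=
    ⟨_,_,_,_,_,_, by funext i; fin_cases i <;> rfl⟩
  obtain ⟨z0,z1,z2,z3,z4,z5,rfl⟩ : ∃ a b c d e f, z = ![a,b,c,d,e,f] :=
    ⟨_,_,_,_,_,_, by funext i; fin_cases i <;> rfl⟩
  rw [dC]
  rw [J7_apply, J7_apply, J7_apply]
  simp only [dC, d2, fund, braa, LinearMap.mk₂_apply, Amat_mulVec, J7_apply, gstd_apply,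
    tri_apply, Pi.sub_apply, Pi.smul_apply, smul_eq_mul,
    Matrix.cons_val_zero, Matrix.cons_val_one, Matrix.head_cons, Matrix.cons_val_two,
    Matrix.tail_cons, Matrix.cons_val_three, Matrix.cons_val_four, cv5,
    Matrix.cons_val', Matrix.empty_val', Matrix.cons_val_fin_one, Matrix.head_fin_const]
  ring
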